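/- Let $\mathcal{T}\colon \mathcal{F} \to \mathcal{F}'$ be a map between spaces of formal power series and suppose $\mathcal{T}$ is induced by an analytic differential map of order $\mathbf{m}$ which is regular with $q = 0$ in the sense that $\operatorname{ord}_0(\partial W_i/\partial u_{j,\alpha}(x,\partial F)) \geq \max(0, |\alpha| + 1 - m_j)$ for all formal $F$. Then $\mathcal{T}$ strictly increases the order at the origin by $0$: for all $F, G$, $\operatorname{ord}_0(\mathcal{T}(F) - \mathcal{T}(G)) > \operatorname{ord}_0(F - G)$. -/

import Mathlib

set_option synthInstance.maxHeartbeats 1000000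
set_option maxHeartbeats 1000000
open scoped ContDiff


open scoped BigOperators

noncomputable section

namespace Stmt16

variable {n : ℕ}

/-- Partial derivative in the `i`-th coordinate direction. -/
def pder (i : Fin n) (f : (Fin n → ℝ) → ℝ) : (Fin n → ℝ) → ℝ :=
  fun x => fderiv ℝ f x (Pi.single i 1)

/-- Iterated partial derivative `∂^{|α|}/∂x^α`. -/
def pdm (α : Fin n → ℕ) (f : (Fin n → ℝ) → ℝ) : (Fin n → ℝ) → ℝ :=
  (List.finRange n).foldr (fun i g => (pder i)^[α i] g) f

/-- `f` vanishes to order at least `N` at the origin: all partial derivatives of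
total order `< N` vanish at `0`. -/
def OrdGe (f : (Fin n → ℝ) → ℝ) (N : ℕ) : Prop :=
  ∀ α : Fin n → ℕ, (∑ i, α i) < N → pdm α f 0 = 0

/-- Index type for the jet coordinates `u_{j,α}`, `|α| ≤ m_j` (each entry of `α` is at
most `m j`). -/
abbrev JetIdx {r : ℕ} (m : Fin r → ℕ) (n : ℕ) := Σ j : Fin r, Fin n → Fin (m j + 1)

/-- The `m`-jet of a tuple of functions, as a point in jet-coordinate space. -/
def jet {r : ℕ} (m : Fin r → ℕ) (F : Fin r → (Fin n → ℝ) → ℝ) (x : Fin n → ℝ) :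
    JetIdx (n := n) m → ℝ :=
  fun p => pdm (fun i => (p.2 i : ℕ)) (F p.1) x

section DdL

/-! ### ddL calculus -/

def ddL (l : List (Fin n)) (f : (Fin n → ℝ) → ℝ) : (Fin n → ℝ) → ℝ := l.foldr pder f

@[simp] lemma ddL_nil (f : (Fin n → ℝ) → ℝ) : ddL [] f = f := rfl

@[simp] lemma ddL_cons (i : Fin n) (l : List (Fin n)) (f : (Fin n → ℝ) → ℝ) :
    ddL (i :: l) f = pder i (ddL l f) := rfl

lemma ddL_append (l₁ l₂ : List (Fin n)) (f : (Fin n → ℝ) → ℝ) :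
    ddL (l₁ ++ l₂) f = ddL l₁ (ddL l₂ f) := by
  simp [ddL, List.foldr_append]

lemma ddL_replicate (k : ℕ) (i : Fin n) (f : (Fin n → ℝ) → ℝ) :
    ddL (List.replicate k i) f = (pder i)^[k] f := by
  induction k with
  | zero => rfl
  | succ k ih => rw [List.replicate_succ, ddL_cons, ih, Function.iterate_succ_apply']

def canon (α : Fin n → ℕ) : List (Fin n) :=
  (List.finRange n).flatMap (fun i => List.replicate (α i) i)

lemma pdm_eq_ddL (α : Fin n → ℕ) (f : (Fin n → ℝ) → ℝ) : pdm α f = ddL (canon α) f := by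
  unfold pdm canon
  induction (List.finRange n) with
  | nil => rfl
  | cons i L ih =>
      rw [List.foldr_cons, List.flatMap_cons, ddL_append, ih, ddL_replicate]

lemma length_canon (α : Fin n → ℕ) : (canon α).length = ∑ i, α i := by
  simp only [canon, List.length_flatMap, Fin.sum_univ_def, Function.comp_def,
    List.length_replicate]

lemma count_canon (α : Fin n → ℕ) (j : Fin n) : (canon α).count j = α j := by
  unfold canon
  have h : ∀ L : List (Fin n),
      (L.flatMap (fun i => List.replicate (α i) i)).count j
        = (L.map (fun i => (List.replicate (α i) i).count j)).sum := by
    intro L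
    induction L with
    | nil => simp
    | cons i L ih => simp [List.flatMap_cons, List.count_append, ih]
  rw [h]
  have : ∀ i, (List.replicate (α i) i).count j = if j = i then α i else 0 := by
    intro i; rw [List.count_replicate]
    rcases eq_or_ne j i with h|h
    · subst h; simp
    · rw [if_neg (by simpa using h.symm), if_neg h]
  simp only [this]
  rw [← Fin.sum_univ_def (fun i => if j = i then α i else 0)]
  simp

lemma perm_canon (l : List (Fin n)) : l.Perm (canon (fun i => l.count i)) := by
  rw [List.perm_iff_count]
  intro a
  rw [count_canon]

lemma length_eq_sum_count (l : List (Fin n)) : l.length = ∑ i, l.count i := by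
  have := (perm_canon l).length_eq
  rw [this, length_canon]


lemma coe2_le_infty : (2 : WithTop ℕ∞) ≤ (∞ : WithTop ℕ∞) := by
  rw [show ((2:WithTop ℕ∞)) = ((2 : ℕ∞) : WithTop ℕ∞) from rfl]
  exact WithTop.coe_le_coe.mpr le_top

variable {U : Set (Fin n → ℝ)} (hU : IsOpen U)

include hU

abbrev Sm (f : (Fin n → ℝ) → ℝ) (U : Set (Fin n → ℝ)) : Prop := ContDiffOn ℝ ∞ f U

lemma Sm.diffAt {f : (Fin n → ℝ) → ℝ} (hf : Sm f U) {x} (hx : x ∈ U) :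
    DifferentiableAt ℝ f x :=
  ((hf x hx).differentiableWithinAt (by
    simp)).differentiableAt (hU.mem_nhds hx)

lemma Sm.fderivSm {f : (Fin n → ℝ) → ℝ} (hf : Sm f U) : ContDiffOn ℝ ∞ (fderiv ℝ f) U :=
  ((contDiffOn_infty_iff_fderiv_of_isOpen hU).mp hf).2

lemma Sm.pder {f : (Fin n → ℝ) → ℝ} (hf : Sm f U) (i : Fin n) : Sm (pder i f) U := by
  have h1 : ContDiffOn ℝ ∞ (fderiv ℝ f) U := hf.fderivSm hU
  exact h1.clm_apply contDiffOn_const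

lemma Sm.ddL {f : (Fin n → ℝ) → ℝ} (hf : Sm f U) (l : List (Fin n)) : Sm (ddL l f) U := by
  induction l with
  | nil => exact hf
  | cons i l ih => exact ih.pder hU i

lemma pder_congr {f g : (Fin n → ℝ) → ℝ} (hfg : ∀ y ∈ U, f y = g y) {x} (hx : x ∈ U) (i : Fin n) :
    pder i f x = pder i g x := by
  have h : f =ᶠ[nhds x] g := Filter.eventually_of_mem (hU.mem_nhds hx) hfg
  unfold Stmt16.pder
  rw [h.fderiv_eq]

lemma ddL_congr {f g : (Fin n → ℝ) → ℝ} (hfg : ∀ y ∈ U, f y = g y) (l : List (Fin n)) :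
    ∀ x ∈ U, ddL l f x = ddL l g x := by
  induction l with
  | nil => exact hfg
  | cons i l ih =>
      intro x hx
      exact pder_congr hU ih hx i

lemma ddL_add {f g : (Fin n → ℝ) → ℝ} (hf : Sm f U) (hg : Sm g U) (l : List (Fin n)) :
    ∀ x ∈ U, ddL l (fun y => f y + g y) x = ddL l f x + ddL l g x := by
  induction l with
  | nil => intro x _; rfl
  | cons i l ih =>
      intro x hx
      rw [ddL_cons, pder_congr hU ih hx i]
      unfold Stmt16.pder
      rw [fderiv_fun_add ((hf.ddL hU l).diffAt hU hx) ((hg.ddL hU l).diffAt hU hx)]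
      rfl

lemma ddL_const_mul {f : (Fin n → ℝ) → ℝ} (hf : Sm f U) (c : ℝ) (l : List (Fin n)) :
    ∀ x ∈ U, ddL l (fun y => c * f y) x = c * ddL l f x := by
  induction l with
  | nil => intro x _; rfl
  | cons i l ih =>
      intro x hx
      rw [ddL_cons, pder_congr hU ih hx i]
      unfold Stmt16.pder
      rw [fderiv_const_mul ((hf.ddL hU l).diffAt hU hx) c]
      rfl

omit hU in
lemma ddL_zero (l : List (Fin n)) : ddL l (fun _ => (0:ℝ)) = fun _ => 0 := by
  induction l with
  | nil => rfl
  | cons i l ih =>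
      rw [ddL_cons, ih]
      funext x
      unfold Stmt16.pder
      rw [fderiv_fun_const]
      rfl

lemma ddL_sub {f g : (Fin n → ℝ) → ℝ} (hf : Sm f U) (hg : Sm g U) (l : List (Fin n)) :
    ∀ x ∈ U, ddL l (fun y => f y - g y) x = ddL l f x - ddL l g x := by
  intro x hx
  have h1 : ∀ y ∈ U, f y - g y = f y + (-1 : ℝ) * g y := by intro y _; ring
  rw [ddL_congr hU h1 l x hx,
    ddL_add hU hf (hg.const_smul (-1 : ℝ) |>.congr (by intro y _; simp [smul_eq_mul])) l x hx]
  rw [ddL_const_mul hU hg (-1) l x hx]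
  ring

lemma ddL_finset_sum {ι : Type*} (S : Finset ι) (h : ι → (Fin n → ℝ) → ℝ)
    (hsm : ∀ p ∈ S, Sm (h p) U) (l : List (Fin n)) :
    ∀ x ∈ U, ddL l (fun y => ∑ p ∈ S, h p y) x = ∑ p ∈ S, ddL l (h p) x := by
  classical
  induction S using Finset.induction with
  | empty =>
      intro x hx
      simpa using congrFun (ddL_zero l) x
  | insert a S' hnot ih =>
      intro x hx
      have hsm' : ∀ p ∈ S', Sm (h p) U := fun p hp => hsm p (Finset.mem_insert_of_mem hp)
      have hsum : Sm (fun y => ∑ p ∈ S', h p y) U := by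
        apply ContDiffOn.sum
        intro p hp; exact hsm' p hp
      have h1 : ∀ y ∈ U, (∑ p ∈ insert a S', h p y) = h a y + ∑ p ∈ S', h p y := by
        intro y _; rw [Finset.sum_insert hnot]
      rw [ddL_congr hU h1 l x hx,
        ddL_add hU (hsm a (Finset.mem_insert_self a S')) hsum l x hx,
        Finset.sum_insert hnot, ih hsm' x hx]

/-- Schwarz symmetry for `pder` on an open set. -/
lemma pder_comm {g : (Fin n → ℝ) → ℝ} (hg : Sm g U) (i j : Fin n) :
    ∀ x ∈ U, pder i (pder j g) x = pder j (pder i g) x := by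
  intro x hx
  have hgd : DifferentiableOn ℝ (fderiv ℝ g) U := (hg.fderivSm hU).differentiableOn (by
    simp)
  have hdc : DifferentiableAt ℝ (fderiv ℝ g) x :=
    (hgd x hx).differentiableAt (hU.mem_nhds hx)
  have key : ∀ v w : Fin n → ℝ,
      fderiv ℝ (fun y => fderiv ℝ g y v) x w = fderiv ℝ (fderiv ℝ g) x w v := by
    intro v w
    rw [fderiv_clm_apply hdc (differentiableAt_const v)]
    simp
  have hsym : IsSymmSndFDerivAt ℝ g x := by
    apply ContDiffAt.isSymmSndFDerivAt (n := ∞) _ (by rw [minSmoothness_of_isRCLikeNormedField]; exact coe2_le_infty)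
    exact hg.contDiffAt (hU.mem_nhds hx)
  show fderiv ℝ (fun y => fderiv ℝ g y (Pi.single j 1)) x (Pi.single i 1)
      = fderiv ℝ (fun y => fderiv ℝ g y (Pi.single i 1)) x (Pi.single j 1)
  rw [key, key]
  exact hsym (Pi.single i 1) (Pi.single j 1)

lemma ddL_perm {f : (Fin n → ℝ) → ℝ} (hf : Sm f U) {l l' : List (Fin n)} (hp : l.Perm l') :
    ∀ x ∈ U, ddL l f x = ddL l' f x := by
  induction hp with
  | nil => intro x _; rfl
  | cons a h ih =>
      intro x hx
      rw [ddL_cons, ddL_cons]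
      exact pder_congr hU ih hx a
  | swap a b l =>
      intro x hx
      show pder b (pder a (ddL l f)) x = pder a (pder b (ddL l f)) x
      exact pder_comm hU (hf.ddL hU l) b a x hx
  | trans h₁ h₂ ih₁ ih₂ =>
      intro x hx
      rw [ih₁ x hx, ih₂ x hx]


section Vsec
include hU
/-! ### vanishing order predicate -/

omit hU

/-- all derivatives of order `< N` vanish at `0`. -/
def Vv (f : (Fin n → ℝ) → ℝ) (N : ℕ) : Prop :=
  ∀ l : List (Fin n), l.length < N → ddL l f 0 = 0

lemma Vv.mono {f : (Fin n → ℝ) → ℝ} {N N' : ℕ} (h : Vv f N) (hle : N' ≤ N) : Vv f N' :=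
  fun l hl => h l (lt_of_lt_of_le hl hle)

lemma vv_zero_fun (N : ℕ) : Vv (fun _ : Fin n → ℝ => (0:ℝ)) N := by
  intro l _
  rw [ddL_zero]

include hU

lemma vv_congr {f g : (Fin n → ℝ) → ℝ} (h0 : (0:Fin n → ℝ) ∈ U)
    (hfg : ∀ y ∈ U, f y = g y) {N : ℕ} (h : Vv g N) : Vv f N := by
  intro l hl
  rw [ddL_congr hU hfg l 0 h0]
  exact h l hl

lemma vv_mul (h0 : (0:Fin n → ℝ) ∈ U) :
    ∀ (l : List (Fin n)) (f g : (Fin n → ℝ) → ℝ), Sm f U → Sm g U →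
      ∀ (A B : ℕ), Vv f A → Vv g B → l.length < A + B →
      ddL l (fun y => f y * g y) 0 = 0 := by
  intro l
  induction l using List.reverseRecOn with
  | nil =>
      intro f g hf hg A B hA hB hlen
      simp only [ddL_nil]
      rcases Nat.pos_of_ne_zero (by omega : A + B ≠ 0) |> fun _ => (by omega : 0 < A ∨ 0 < B) with h|h
      · have := hA [] (by simpa using h); simp only [ddL_nil] at this; rw [this]; ring
      · have := hB [] (by simpa using h); simp only [ddL_nil] at this; rw [this]; ring
  | append_singleton l i ih =>
      intro f g hf hg A B hA hB hlen
      rw [ddL_append]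
      have hsm : Sm (fun y => pder i f y * g y + f y * pder i g y) U := by
        apply ContDiffOn.add
        · exact (hf.pder hU i).mul hg
        · exact hf.mul (hg.pder hU i)
      have heq : ∀ y ∈ U, ddL [i] (fun z => f z * g z) y
          = pder i f y * g y + f y * pder i g y := by
        intro y hy
        show pder i (fun z => f z * g z) y = _
        unfold Stmt16.pder
        rw [fderiv_fun_mul (hf.diffAt hU hy) (hg.diffAt hU hy)]
        simp only [ContinuousLinearMap.add_apply, ContinuousLinearMap.coe_smul',
          Pi.smul_apply, smul_eq_mul]
        ring
      rw [ddL_congr hU heq l 0 h0]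
      have hppf : Vv (pder i f) (A - 1) := by
        intro l' hl'
        have : ddL l' (pder i f) 0 = ddL (l' ++ [i]) f 0 := by rw [ddL_append]; rfl
        rw [this]
        exact hA _ (by simpa using (by omega : l'.length + 1 < A))
      have hppg : Vv (pder i g) (B - 1) := by
        intro l' hl'
        have : ddL l' (pder i g) 0 = ddL (l' ++ [i]) g 0 := by rw [ddL_append]; rfl
        rw [this]
        exact hB _ (by simpa using (by omega : l'.length + 1 < B))
      have hlen' : l.length + 1 < A + B := by simpa using hlen
      have t1 : ddL l (fun y => pder i f y * g y) 0 = 0 :=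
        ih (pder i f) g (hf.pder hU i) hg (A - 1) B hppf hB (by omega)
      have t2 : ddL l (fun y => f y * pder i g y) 0 = 0 :=
        ih f (pder i g) hf (hg.pder hU i) A (B - 1) hA hppg (by omega)
      rw [ddL_add hU ((hf.pder hU i).mul hg) (hf.mul (hg.pder hU i)) l 0 h0, t1, t2]
      ring

lemma Vv.mul {f g : (Fin n → ℝ) → ℝ} (h0 : (0:Fin n → ℝ) ∈ U) (hf : Sm f U) (hg : Sm g U)
    {A B : ℕ} (hA : Vv f A) (hB : Vv g B) : Vv (fun y => f y * g y) (A + B) :=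
  fun l hl => vv_mul hU h0 l f g hf hg A B hA hB hl

omit hU in
lemma pdm_zero_fun (f : (Fin n → ℝ) → ℝ) : pdm (fun _ => 0) f = f := by
  unfold pdm
  induction (List.finRange n) with
  | nil => rfl
  | cons i L ih => rw [List.foldr_cons, ih]; rfl

lemma ordGe_iff_vv {f : (Fin n → ℝ) → ℝ} (h0 : (0:Fin n → ℝ) ∈ U) (hf : Sm f U) {N : ℕ} :
    OrdGe f N ↔ Vv f N := by
  constructor
  · intro h l hl
    have hperm := perm_canon l
    rw [ddL_perm hU hf hperm 0 h0, ← pdm_eq_ddL]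
    exact h _ (by rw [← length_eq_sum_count]; exact hl)
  · intro h α hα
    rw [pdm_eq_ddL]
    exact h _ (by rw [length_canon]; exact hα)


end Vsec
end DdL

section Parametric

variable {E : Type} [NormedAddCommGroup E] [NormedSpace ℝ E] [ProperSpace E]

lemma hasFDerivAt_parint {G : Type*} [NormedAddCommGroup G] [NormedSpace ℝ G] [CompleteSpace G]
    (ψ : E × ℝ → G) (hψ : ContDiff ℝ ∞ ψ) (z₀ : E) :
    HasFDerivAt (fun z => ∫ t in (0:ℝ)..1, ψ (z, t))
      (∫ t in (0:ℝ)..1, (fderiv ℝ ψ (z₀, t)).comp (ContinuousLinearMap.inl ℝ E ℝ)) z₀ := by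
  have hψ' : ContDiff ℝ ∞ (fun w => (fderiv ℝ ψ w).comp (ContinuousLinearMap.inl ℝ E ℝ)) :=
    (hψ.fderiv_right (le_refl _)).clm_comp contDiff_const
  obtain ⟨C, hC⟩ := ((isCompact_closedBall z₀ 1).prod (isCompact_uIcc (a := (0:ℝ)) (b := 1))
    ).exists_bound_of_continuousOn hψ'.continuous.continuousOn
  apply intervalIntegral.hasFDerivAt_integral_of_dominated_of_fderiv_le
    (F := fun z t => ψ (z, t))
    (F' := fun z t => (fderiv ℝ ψ (z, t)).comp (ContinuousLinearMap.inl ℝ E ℝ))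
    (bound := fun _ => C) (s := Metric.ball z₀ 1) (Metric.ball_mem_nhds z₀ one_pos)
  · filter_upwards with x
    exact ((hψ.continuous.comp (Continuous.prodMk_right x)).aestronglyMeasurable).restrict
  · exact (hψ.continuous.comp (Continuous.prodMk_right z₀)).intervalIntegrable 0 1
  · exact ((hψ'.continuous.comp (Continuous.prodMk_right z₀)).aestronglyMeasurable).restrict
  · filter_upwards with t ht x hx
    exact hC ((x, t)) ⟨Metric.ball_subset_closedBall hx, Set.uIoc_subset_uIcc ht⟩
  · exact intervalIntegrable_const
  · filter_upwards with t ht x hx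
    exact (hψ.differentiable (by
      simp) (x, t)).hasFDerivAt.comp x
      (hasFDerivAt_prodMk_left x t)

lemma contDiff_parint (k : ℕ) :
    ∀ {G : Type} [NormedAddCommGroup G] [NormedSpace ℝ G] [CompleteSpace G]
      (ψ : E × ℝ → G), ContDiff ℝ ∞ ψ →
      ContDiff ℝ (k : WithTop ℕ∞) (fun z => ∫ t in (0:ℝ)..1, ψ (z, t)) := by
  induction k with
  | zero =>
      intro G _ _ _ ψ hψ
      rw [show ((0:ℕ):WithTop ℕ∞) = 0 from rfl, contDiff_zero]
      have hdiff : Differentiable ℝ (fun z => ∫ t in (0:ℝ)..1, ψ (z, t)) :=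
        fun z => (hasFDerivAt_parint ψ hψ z).differentiableAt
      exact hdiff.continuous
  | succ k ih =>
      intro G _ _ _ ψ hψ
      have hdiff : Differentiable ℝ (fun z => ∫ t in (0:ℝ)..1, ψ (z, t)) :=
        fun z => (hasFDerivAt_parint ψ hψ z).differentiableAt
      have hψ' : ContDiff ℝ ∞ (fun w => (fderiv ℝ ψ w).comp (ContinuousLinearMap.inl ℝ E ℝ)) :=
        (hψ.fderiv_right (le_refl _)).clm_comp contDiff_const
      have hfd : (fderiv ℝ (fun z => ∫ t in (0:ℝ)..1, ψ (z, t)))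
          = fun z => ∫ t in (0:ℝ)..1, (fderiv ℝ ψ (z, t)).comp (ContinuousLinearMap.inl ℝ E ℝ) := by
        funext z
        exact (hasFDerivAt_parint ψ hψ z).fderiv
      rw [show (((k+1:ℕ)):WithTop ℕ∞) = (k : WithTop ℕ∞) + 1 by norm_cast]
      rw [contDiff_succ_iff_fderiv]
      refine ⟨hdiff, by simp, ?_⟩
      rw [hfd]
      exact ih (G := E →L[ℝ] G) (fun w => (fderiv ℝ ψ w).comp (ContinuousLinearMap.inl ℝ E ℝ)) hψ'

lemma contDiff_parint_infty {G : Type} [NormedAddCommGroup G] [NormedSpace ℝ G] [CompleteSpace G]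
    (ψ : E × ℝ → G) (hψ : ContDiff ℝ ∞ ψ) :
    ContDiff ℝ ∞ (fun z => ∫ t in (0:ℝ)..1, ψ (z, t)) := by
  rw [show ((∞ : WithTop ℕ∞)) = ((⊤ : ℕ∞) : WithTop ℕ∞) from rfl, contDiff_infty]
  intro k
  exact contDiff_parint k ψ hψ

end Parametric

lemma infty_le1 : (1 : WithTop ℕ∞) ≤ (∞ : WithTop ℕ∞) := by
  rw [show ((1:WithTop ℕ∞)) = ((1 : ℕ∞) : WithTop ℕ∞) from rfl]
  exact WithTop.coe_le_coe.mpr le_top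

section Hadamard

variable {r s : ℕ} (m : Fin r → ℕ)
  (W : (Fin n → ℝ) × (JetIdx (n := n) m → ℝ) → Fin s → ℝ) (i : Fin s)

def phiW (p : JetIdx (n := n) m) (z : (Fin n → ℝ) × (JetIdx (n := n) m → ℝ)) : ℝ :=
  fderiv ℝ (fun u => W (z.1, u) i) z.2 (Pi.single p 1)

def AA (p : JetIdx (n := n) m)
    (z : (Fin n → ℝ) × (JetIdx (n := n) m → ℝ) × (JetIdx (n := n) m → ℝ)) : ℝ :=
  ∫ t in (0:ℝ)..1, phiW m W i p (z.1, z.2.2 + t • (z.2.1 - z.2.2))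

variable (hWi : ContDiff ℝ ∞ (fun z => W z i))

include hWi

lemma phiW_eq_fderiv (p : JetIdx (n := n) m) (z : (Fin n → ℝ) × (JetIdx (n := n) m → ℝ)) :
    phiW m W i p z = fderiv ℝ (fun z' => W z' i) z ((0 : Fin n → ℝ), Pi.single p 1) := by
  have hin : HasFDerivAt (fun u : JetIdx (n := n) m → ℝ => ((z.1, u)))
      (ContinuousLinearMap.inr ℝ _ _) z.2 := hasFDerivAt_prodMk_right z.1 z.2
  have hcomp : HasFDerivAt (fun u : JetIdx (n := n) m → ℝ => W (z.1, u) i)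
      ((fderiv ℝ (fun z' => W z' i) (z.1, z.2)).comp (ContinuousLinearMap.inr ℝ _ _)) z.2 :=
    (hWi.differentiable (by simp) (z.1, z.2)).hasFDerivAt.comp z.2 hin
  show fderiv ℝ (fun u => W (z.1, u) i) z.2 (Pi.single p 1) = _
  rw [hcomp.fderiv]
  simp

lemma contDiff_phiW (p : JetIdx (n := n) m) : ContDiff ℝ ∞ (phiW m W i p) := by
  have : phiW m W i p
      = fun z => fderiv ℝ (fun z' => W z' i) z ((0 : Fin n → ℝ), Pi.single p 1) :=
    funext fun z => phiW_eq_fderiv m W i hWi p z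
  rw [this]
  exact (hWi.fderiv_right (le_of_eq rfl)).clm_apply contDiff_const

lemma contDiff_AA (p : JetIdx (n := n) m) : ContDiff ℝ ∞ (AA m W i p) := by
  apply contDiff_parint_infty
    (ψ := fun w : ((Fin n → ℝ) × (JetIdx (n := n) m → ℝ) × (JetIdx (n := n) m → ℝ)) × ℝ =>
      phiW m W i p (w.1.1, w.1.2.2 + w.2 • (w.1.2.1 - w.1.2.2)))
  exact (contDiff_phiW m W i hWi p).comp ((contDiff_fst.fst).prodMk
    ((contDiff_fst.snd.snd).add (contDiff_snd.smul (contDiff_fst.snd.fst.sub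
      contDiff_fst.snd.snd))))

lemma AA_key (x : Fin n → ℝ) (u v : JetIdx (n := n) m → ℝ) :
    W (x, u) i - W (x, v) i
      = ∑ p : JetIdx (n := n) m, (u p - v p) * AA m W i p (x, u, v) := by
  classical
  have hcurvec : Continuous (fun t : ℝ =>
      ((x, v + t • (u - v)) : (Fin n → ℝ) × (JetIdx (n := n) m → ℝ))) :=
    continuous_const.prodMk (continuous_const.add (continuous_id.smul continuous_const))
  have hg : ∀ t : ℝ, HasDerivAt (fun t' : ℝ => W (x, v + t' • (u - v)) i)
      (fderiv ℝ (fun z' => W z' i) (x, v + t • (u - v)) ((0 : Fin n → ℝ), u - v)) t := by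
    intro t
    have hcurve : HasDerivAt (fun t' : ℝ =>
        ((x, v + t' • (u - v)) : (Fin n → ℝ) × (JetIdx (n := n) m → ℝ)))
        (((0 : Fin n → ℝ), u - v)) t := by
      apply (hasDerivAt_const t x).prodMk
      simpa using ((hasDerivAt_id t).smul_const (u - v)).const_add v
    have := (hWi.differentiable (by simp) _).hasFDerivAt.comp_hasDerivAt t hcurve
    simpa [Function.comp_def] using this
  have hexp : ∀ z : (Fin n → ℝ) × (JetIdx (n := n) m → ℝ),
      fderiv ℝ (fun z' => W z' i) z ((0 : Fin n → ℝ), u - v)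
        = ∑ p : JetIdx (n := n) m, (u p - v p) * phiW m W i p z := by
    intro z
    have hsum : (((0 : Fin n → ℝ), u - v) : (Fin n → ℝ) × (JetIdx (n := n) m → ℝ))
        = ∑ p : JetIdx (n := n) m, (u p - v p) •
            (((0 : Fin n → ℝ), Pi.single p 1) : (Fin n → ℝ) × (JetIdx (n := n) m → ℝ)) := by
      apply Prod.ext
      · simp [Prod.fst_sum]
      · rw [Prod.snd_sum]
        funext q
        simp [Finset.sum_apply, Pi.single_apply, mul_ite, Finset.sum_ite_eq]
    rw [hsum, map_sum]
    apply Finset.sum_congr rfl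
    intro p _
    rw [map_smul, smul_eq_mul, phiW_eq_fderiv m W i hWi p z]
  have hderiv_eq : deriv (fun t' : ℝ => W (x, v + t' • (u - v)) i)
      = fun t => ∑ p : JetIdx (n := n) m, (u p - v p) * phiW m W i p (x, v + t • (u - v)) := by
    funext t
    rw [(hg t).deriv, hexp]
  have hcont2 : Continuous (fun t : ℝ =>
      ∑ p : JetIdx (n := n) m, (u p - v p) * phiW m W i p (x, v + t • (u - v))) := by
    apply continuous_finset_sum
    intro p _
    exact continuous_const.mul ((contDiff_phiW m W i hWi p).continuous.comp hcurvec)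
  have hftc := intervalIntegral.integral_deriv_eq_sub
    (f := fun t' : ℝ => W (x, v + t' • (u - v)) i) (a := 0) (b := 1)
    (fun t _ => (hg t).differentiableAt)
    (by rw [hderiv_eq]; exact hcont2.intervalIntegrable 0 1)
  rw [hderiv_eq] at hftc
  have hend : W (x, v + (1:ℝ) • (u - v)) i - W (x, v + (0:ℝ) • (u - v)) i
      = W (x, u) i - W (x, v) i := by
    simp
  rw [← hend, ← hftc]
  beta_reduce
  rw [intervalIntegral.integral_finset_sum
    (f := fun p t => (u p - v p) * phiW m W i p (x, v + t • (u - v))) (fun p _ =>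
    (continuous_const.mul ((contDiff_phiW m W i hWi p).continuous.comp hcurvec)
      ).intervalIntegrable 0 1)]
  apply Finset.sum_congr rfl
  intro p _
  rw [intervalIntegral.integral_const_mul]
  rfl

end Hadamard

/-- directional derivative along a direction of invariance vanishes -/
lemma fderiv_zero_of_const_line {X : Type} [NormedAddCommGroup X] [NormedSpace ℝ X]
    (f : X → ℝ) (y v : X) (hd : DifferentiableAt ℝ f y)
    (hconst : ∀ s : ℝ, f (y + s • v) = f y) : fderiv ℝ f y v = 0 := by
  have hcurve : HasDerivAt (fun s : ℝ => y + s • v) v 0 := by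
    simpa using ((hasDerivAt_id (0:ℝ)).smul_const v).const_add y
  have h1 : HasDerivAt (fun s : ℝ => f (y + s • v)) (fderiv ℝ f y v) 0 := by
    have hd' : HasFDerivAt f (fderiv ℝ f y) ((fun s : ℝ => y + s • v) 0) := by
      simpa using hd.hasFDerivAt
    have := hd'.comp_hasDerivAt 0 hcurve
    simpa [Function.comp_def] using this
  have h2 : HasDerivAt (fun s : ℝ => f (y + s • v)) 0 0 := by
    have : (fun s : ℝ => f (y + s • v)) = fun _ => f y := funext hconst
    rw [this]
    exact hasDerivAt_const 0 (f y)
  exact h1.unique h2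





/-- If `𝒯(F)(x) = W(x, j^𝐦_x F)` is an analytic differential map of order `𝐦` which is
regular with `q = 0` (i.e. `ord₀(∂W_i/∂u_{j,α}(x, ∂F)) ≥ max(0, |α| + 1 - m_j)` along
any admissible `F`), then `𝒯` strictly increases the order at the origin by `0`:
`ord₀(𝒯(F) - 𝒯(G)) > ord₀(F - G)` (orders of tuples being measured relative to the
grading shifted by `𝐦`). -/
theorem regular_strictly_increases_order
    {r s : ℕ} (m : Fin r → ℕ)
    (W : (Fin n → ℝ) × (JetIdx (n := n) m → ℝ) → Fin s → ℝ)
    (hWan : ∀ p, AnalyticAt ℝ W p)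
    -- `W` depends only on the legitimate jet coordinates, those with `|α| ≤ m_j` :
    (hWdep : ∀ (i : Fin s) (x : Fin n → ℝ) (u u' : JetIdx (n := n) m → ℝ),
      (∀ p : JetIdx (n := n) m, (∑ t, ((p.2 t : ℕ))) ≤ m p.1 → u p = u' p) →
      W (x, u) i = W (x, u') i)
    -- regularity with `q = 0` :
    (hreg : ∀ F : Fin r → (Fin n → ℝ) → ℝ,
      (∀ j, AnalyticAt ℝ (F j) 0) → (∀ j, OrdGe (F j) (m j)) →
      ∀ (i : Fin s) (p : JetIdx (n := n) m), (∑ t, ((p.2 t : ℕ))) ≤ m p.1 →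
        OrdGe (fun x => fderiv ℝ (fun u => W (x, u) i) (jet m F x) (Pi.single p 1))
          ((∑ t, ((p.2 t : ℕ))) + 1 - m p.1)) :
    ∀ F G : Fin r → (Fin n → ℝ) → ℝ,
      (∀ j, AnalyticAt ℝ (F j) 0) → (∀ j, AnalyticAt ℝ (G j) 0) →
      (∀ j, OrdGe (F j) (m j)) → (∀ j, OrdGe (G j) (m j)) →
      ∀ N : ℕ, (∀ j, OrdGe (fun x => F j x - G j x) (N + m j)) →
      ∀ i : Fin s,
        OrdGe (fun x => W (x, jet m F x) i - W (x, jet m G x) i) (N + 1) := by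
  intro F G hFa hGa hF hG N hFG i
  classical
  have hWc : ContDiff ℝ ∞ W := contDiff_iff_contDiffAt.mpr fun p => (hWan p).contDiffAt
  have hWi : ContDiff ℝ ∞ (fun z => W z i) := (contDiff_pi.mp hWc) i
  have hev : ∀ᶠ x in nhds (0 : Fin n → ℝ),
      (∀ j, AnalyticAt ℝ (F j) x) ∧ (∀ j, AnalyticAt ℝ (G j) x) :=
    (Filter.eventually_all.mpr fun j => (hFa j).eventually_analyticAt).and
      (Filter.eventually_all.mpr fun j => (hGa j).eventually_analyticAt)
  obtain ⟨U, hUsub, hU, h0U⟩ := eventually_nhds_iff.mp hev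
  have hFs : ∀ j, Sm (F j) U := fun j x hx =>
    (((hUsub x hx).1 j).contDiffAt (n := ∞)).contDiffWithinAt
  have hGs : ∀ j, Sm (G j) U := fun j x hx =>
    (((hUsub x hx).2 j).contDiffAt (n := ∞)).contDiffWithinAt
  have hjetFs : ContDiffOn ℝ ∞ (fun x => jet m F x) U := by
    apply contDiffOn_pi.mpr
    intro p
    show ContDiffOn ℝ ∞ (fun x => pdm (fun q => ((p.2 q : ℕ))) (F p.1) x) U
    simp only [pdm_eq_ddL]
    exact (hFs p.1).ddL hU _
  have hjetGs : ContDiffOn ℝ ∞ (fun x => jet m G x) U := by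
    apply contDiffOn_pi.mpr
    intro p
    show ContDiffOn ℝ ∞ (fun x => pdm (fun q => ((p.2 q : ℕ))) (G p.1) x) U
    simp only [pdm_eq_ddL]
    exact (hGs p.1).ddL hU _
  have hΔsm : ∀ p : JetIdx (n := n) m, Sm (fun x => jet m F x p - jet m G x p) U := by
    intro p
    show Sm (fun x => pdm (fun q => ((p.2 q : ℕ))) (F p.1) x
      - pdm (fun q => ((p.2 q : ℕ))) (G p.1) x) U
    simp only [pdm_eq_ddL]
    exact ((hFs p.1).ddL hU _).sub ((hGs p.1).ddL hU _)
  have hBsm : ∀ p : JetIdx (n := n) m,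
      Sm (fun x => AA m W i p (x, jet m F x, jet m G x)) U := fun p =>
    (contDiff_AA m W i hWi p).comp_contDiffOn (contDiffOn_id.prodMk (hjetFs.prodMk hjetGs))
  have hpdmFt : ∀ (t : ℝ) (j : Fin r) (β : Fin n → ℕ),
      pdm β (fun x => G j x + t * (F j x - G j x)) 0
        = pdm β (G j) 0 + t * (pdm β (F j) 0 - pdm β (G j) 0) := by
    intro t j β
    have hsmFG : Sm (fun y => F j y - G j y) U := (hFs j).sub (hGs j)
    have h1 : Sm (fun y => t * (F j y - G j y)) U := contDiffOn_const.mul hsmFG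
    have h2 : ddL (canon β) (fun y => t * (F j y - G j y)) 0
        = t * ddL (canon β) (fun y => F j y - G j y) 0 :=
      ddL_const_mul hU hsmFG t (canon β) 0 h0U
    have h3 : ddL (canon β) (fun y => F j y - G j y) 0
        = ddL (canon β) (F j) 0 - ddL (canon β) (G j) 0 :=
      ddL_sub hU (hFs j) (hGs j) (canon β) 0 h0U
    have h4 : ddL (canon β) (fun x => G j x + t * (F j x - G j x)) 0
        = ddL (canon β) (G j) 0 + ddL (canon β) (fun y => t * (F j y - G j y)) 0 :=
      ddL_add hU (hGs j) h1 (canon β) 0 h0U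
    simp only [pdm_eq_ddL]
    rw [h4, h2, h3]
  have hFto : ∀ t : ℝ, ∀ j, OrdGe (fun x => G j x + t * (F j x - G j x)) (m j) := by
    intro t j β hβ
    rw [hpdmFt t j β, hG j β hβ, hF j β hβ]
    ring
  have hFta : ∀ t : ℝ, ∀ j, AnalyticAt ℝ (fun x => G j x + t * (F j x - G j x)) 0 :=
    fun t j => (hGa j).add (analyticAt_const.mul ((hFa j).sub (hGa j)))
  have hjetFt0 : ∀ t : ℝ, jet m (fun j x => G j x + t * (F j x - G j x)) 0
      = jet m G 0 + t • (jet m F 0 - jet m G 0) := by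
    intro t
    funext p
    show pdm (fun q => ((p.2 q : ℕ))) (fun x => G p.1 x + t * (F p.1 x - G p.1 x)) 0 = _
    rw [hpdmFt t p.1]
    simp [jet, smul_eq_mul]
  have htop : ∀ p : JetIdx (n := n) m, (∑ q, ((p.2 q : ℕ))) = m p.1 →
      ∀ t : ℝ, phiW m W i p
        ((0 : Fin n → ℝ), jet m G 0 + t • (jet m F 0 - jet m G 0)) = 0 := by
    intro p hps t
    have hr := hreg (fun j x => G j x + t * (F j x - G j x)) (hFta t) (hFto t) i p
      (le_of_eq hps)
    have hlt : (∑ q : Fin n, (fun _ : Fin n => 0) q)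
        < (∑ q, ((p.2 q : ℕ))) + 1 - m p.1 := by
      rw [hps]; simp
    have h0 := hr (fun _ => 0) hlt
    rw [pdm_zero_fun] at h0
    rw [← hjetFt0 t]
    simpa [phiW] using h0
  have hBtop : ∀ p : JetIdx (n := n) m, (∑ q, ((p.2 q : ℕ))) = m p.1 →
      AA m W i p ((0 : Fin n → ℝ), jet m F 0, jet m G 0) = 0 := by
    intro p hps
    show (∫ t in (0:ℝ)..1,
      phiW m W i p ((0 : Fin n → ℝ), jet m G 0 + t • (jet m F 0 - jet m G 0))) = 0
    rw [show (fun t : ℝ => phiW m W i p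
        ((0 : Fin n → ℝ), jet m G 0 + t • (jet m F 0 - jet m G 0))) = fun _ => (0:ℝ)
      from funext fun t => htop p hps t]
    simp
  have hilleg : ∀ p : JetIdx (n := n) m, ¬ ((∑ q, ((p.2 q : ℕ))) ≤ m p.1) →
      ∀ z : (Fin n → ℝ) × (JetIdx (n := n) m → ℝ), phiW m W i p z = 0 := by
    intro p hp z
    show fderiv ℝ (fun u => W (z.1, u) i) z.2 (Pi.single p 1) = 0
    apply fderiv_zero_of_const_line
    · have hd : Differentiable ℝ (fun u : JetIdx (n := n) m → ℝ => W (z.1, u) i) :=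
        (hWi.differentiable (by simp)).comp ((differentiable_const z.1).prodMk differentiable_id)
      exact hd z.2
    · intro s'
      apply hWdep
      intro q hq
      have hqp : q ≠ p := by rintro rfl; exact hp hq
      simp [Pi.single_apply, hqp]
  have hΔv : ∀ p : JetIdx (n := n) m, Vv (fun x => jet m F x p - jet m G x p)
      (N + m p.1 - (∑ q, ((p.2 q : ℕ)))) := by
    intro p l hl
    have e1 : ∀ y ∈ U, jet m F y p - jet m G y p
        = ddL (canon (fun q => ((p.2 q : ℕ)))) (fun x => F p.1 x - G p.1 x) y := by
      intro y hy
      show pdm (fun q => ((p.2 q : ℕ))) (F p.1) y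
          - pdm (fun q => ((p.2 q : ℕ))) (G p.1) y = _
      simp only [pdm_eq_ddL]
      rw [ddL_sub hU (hFs p.1) (hGs p.1) _ y hy]
    rw [ddL_congr hU e1 l 0 h0U, ← ddL_append]
    have hvv : Vv (fun x => F p.1 x - G p.1 x) (N + m p.1) :=
      (ordGe_iff_vv hU h0U ((hFs p.1).sub (hGs p.1))).mp (hFG p.1)
    apply hvv
    rw [List.length_append, length_canon]
    omega
  intro α hα
  rw [pdm_eq_ddL]
  have hlen : (canon α).length ≤ N := by rw [length_canon]; omega
  have heqfun : (fun x => W (x, jet m F x) i - W (x, jet m G x) i)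
      = fun x => ∑ p : JetIdx (n := n) m,
          (jet m F x p - jet m G x p) * AA m W i p (x, jet m F x, jet m G x) :=
    funext fun x => AA_key m W i hWi x (jet m F x) (jet m G x)
  rw [heqfun]
  have hterm_sm : ∀ p ∈ (Finset.univ : Finset (JetIdx (n := n) m)), Sm (fun x =>
      (jet m F x p - jet m G x p) * AA m W i p (x, jet m F x, jet m G x)) U :=
    fun p _ => (hΔsm p).mul (hBsm p)
  rw [ddL_finset_sum hU Finset.univ _ hterm_sm (canon α) 0 h0U]
  apply Finset.sum_eq_zero
  intro p _
  by_cases hp : (∑ q, ((p.2 q : ℕ))) ≤ m p.1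
  · by_cases hps : (∑ q, ((p.2 q : ℕ))) = m p.1
    · have h1 : Vv (fun x => jet m F x p - jet m G x p) N := (hΔv p).mono (by omega)
      have h2 : Vv (fun x => AA m W i p (x, jet m F x, jet m G x)) 1 := by
        intro l' hl'
        have hl'' : l' = [] := List.length_eq_zero_iff.mp (by omega)
        subst hl''
        simpa using hBtop p hps
      exact Vv.mul hU h0U (hΔsm p) (hBsm p) h1 h2 (canon α) (by omega)
    · have h1 : Vv (fun x => jet m F x p - jet m G x p) (N + 1) := (hΔv p).mono (by omega)
      have h2 : Vv (fun x => AA m W i p (x, jet m F x, jet m G x)) 0 :=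
        fun l' hl' => absurd hl' (by omega)
      exact Vv.mul hU h0U (hΔsm p) (hBsm p) h1 h2 (canon α) (by omega)
  · have hz : (fun x => (jet m F x p - jet m G x p)
        * AA m W i p (x, jet m F x, jet m G x)) = fun _ => (0:ℝ) := by
      funext x
      have hA0 : AA m W i p (x, jet m F x, jet m G x) = 0 := by
        show (∫ t in (0:ℝ)..1,
          phiW m W i p (x, jet m G x + t • (jet m F x - jet m G x))) = 0
        rw [show (fun t : ℝ => phiW m W i p
            (x, jet m G x + t • (jet m F x - jet m G x))) = fun _ => (0:ℝ)
          from funext fun t => hilleg p hp _]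
        simp
      rw [hA0, mul_zero]
    rw [hz, ddL_zero]

end Stmt16
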